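/- arXiv:2312.05938 — 2 statements merged into one kernel-verified Lean document; each statement's English description precedes it below -/
import Mathlib

section
/- Let s ≥ 1 be an integer and let k and n be squarefree positive integers. Then μ(k)·c_k^{(s)}(n^s) = μ(n)·c_n^{(s)}(k^s), where μ is the Möbius function. -/
open scoped BigOperators
open ArithmeticFunction
open scoped ArithmeticFunction.Moebius
open scoped ArithmeticFunction.zeta

/-- Generalized gcd `(a,b)_s`: the largest `d ^ s` (with `d` a positive integer)
dividing both `a` and `b`. -/
def ggcd (s a b : ℕ) : ℕ :=
  (Nat.findGreatest (fun d => d ^ s ∣ a ∧ d ^ s ∣ b) (max a b)) ^ s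

/-- The Cohen–Ramanujan sum `c_k^{(s)}(n) = Σ_{h=1, (h,k^s)_s=1}^{k^s} e^{2πinh/k^s}`. -/
noncomputable def CRS (s k n : ℕ) : ℂ :=
  ∑ h ∈ Finset.Icc 1 (k ^ s),
    if ggcd s h (k ^ s) = 1 then
      Complex.exp (2 * Real.pi * Complex.I * n * h / (k ^ s))
    else 0

/-- The core of `k`: its largest squarefree divisor. -/
def core (k : ℕ) : ℕ := ∏ p ∈ k.primeFactors, p

/-- `k* = k / k̄`. -/
def spart (k : ℕ) : ℕ := k / core k

/-- `ξ_d(k) = d` if `d ∣ k`, and `0` otherwise. -/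
def xi (d k : ℕ) : ℕ := if d ∣ k then d else 0

/-- Klee's function `Φ_s(n) = n ∏_{p prime, p^s ∣ n} (1 - 1/p^s)`. -/
noncomputable def Klee (s n : ℕ) : ℂ :=
  n * ∏ p ∈ n.primeFactors.filter (fun p => p ^ s ∣ n), (1 - 1 / (p : ℂ) ^ s)

/-- The Jordan totient function `J_s(n) = n^s ∏_{p ∣ n} (1 - 1/p^s)` (as a complex number). -/
noncomputable def Jordan (s n : ℕ) : ℂ :=
  (n : ℂ) ^ s * ∏ p ∈ n.primeFactors, (1 - 1 / (p : ℂ) ^ s)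

lemma geo_sum (M a : ℕ) (hM : 0 < M) :
    ∑ h ∈ Finset.Icc 1 M, Complex.exp (2 * Real.pi * Complex.I * (a : ℂ) * (h : ℂ) / (M : ℂ))
      = if M ∣ a then (M : ℂ) else 0 := by
  have hM0 : (M : ℂ) ≠ 0 := Nat.cast_ne_zero.mpr hM.ne'
  have h2pi : (2 * (Real.pi : ℂ) * Complex.I) ≠ 0 := by
    simp [Real.pi_ne_zero, Complex.I_ne_zero, two_ne_zero]
  set W : ℂ := Complex.exp (2 * Real.pi * Complex.I * (a : ℂ) / (M : ℂ)) with hW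
  have hterm : ∀ h : ℕ, Complex.exp (2 * Real.pi * Complex.I * (a : ℂ) * (h : ℂ) / (M : ℂ)) = W ^ h := by
    intro h
    rw [hW, ← Complex.exp_nat_mul]
    ring_nf
  have hWM : W ^ M = 1 := by
    rw [hW, ← Complex.exp_nat_mul]
    have e : (M : ℂ) * (2 * Real.pi * Complex.I * (a : ℂ) / (M : ℂ))
        = ((a : ℤ) : ℂ) * (2 * Real.pi * Complex.I) := by
      push_cast
      field_simp
    rw [e, Complex.exp_int_mul_two_pi_mul_I]
  simp_rw [hterm]
  by_cases hdvd : M ∣ a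
  · obtain ⟨c, rfl⟩ := hdvd
    have hW1 : W = 1 := by
      rw [hW]
      have e : 2 * (Real.pi : ℂ) * Complex.I * ((M * c : ℕ) : ℂ) / (M : ℂ)
          = ((c : ℤ) : ℂ) * (2 * Real.pi * Complex.I) := by
        push_cast
        field_simp
      rw [e, Complex.exp_int_mul_two_pi_mul_I]
    simp [hW1, Nat.card_Icc, Dvd.intro c rfl]
  · have hW1 : W ≠ 1 := by
      intro h1
      obtain ⟨m, hm⟩ := Complex.exp_eq_one_iff.mp (hW ▸ h1)
      apply hdvd
      have key : (a : ℂ) = (m : ℂ) * (M : ℂ) := by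
        rw [div_eq_iff hM0] at hm
        apply mul_left_cancel₀ h2pi
        linear_combination hm
      have key2 : (a : ℤ) = (M : ℤ) * m := by exact_mod_cast key.trans (mul_comm _ _)
      exact Int.natCast_dvd_natCast.mp ⟨m, key2⟩
    rw [← Finset.Ico_add_one_right_eq_Icc, Finset.sum_Ico_eq_sum_range]
    simp only [Nat.add_sub_cancel]
    have : ∀ i ∈ Finset.range M, W ^ (1 + i) = W * W ^ i := by
      intro i _; rw [pow_add, pow_one]
    rw [Finset.sum_congr rfl this, ← Finset.mul_sum, geom_sum_eq hW1, hWM]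
    simp [hdvd]



lemma ggcd_eq_one_iff (s : ℕ) (hs : 1 ≤ s) {h k : ℕ} (hh : 0 < h) (hk : 0 < k) :
    ggcd s h (k ^ s) = 1 ↔ ∀ p ∈ k.primeFactors, ¬ p ^ s ∣ h := by
  have hs0 : s ≠ 0 := by omega
  unfold ggcd
  set P : ℕ → Prop := fun d => d ^ s ∣ h ∧ d ^ s ∣ k ^ s with hP
  set b : ℕ := max h (k ^ s) with hb
  have hP1 : P 1 := by simp [hP]
  have h1b : 1 ≤ b := le_trans hh (le_max_left _ _)
  have hF1 : 1 ≤ Nat.findGreatest P b := Nat.le_findGreatest h1b hP1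
  rw [pow_eq_one_iff_left hs0]
  constructor
  · intro hF p hp hps
    have hpk : p ∣ k := Nat.dvd_of_mem_primeFactors hp
    have hpprime : p.Prime := Nat.prime_of_mem_primeFactors hp
    have hPp : P p := ⟨hps, pow_dvd_pow_of_dvd hpk s⟩
    have hpb : p ≤ b := le_trans (le_trans (Nat.le_self_pow hs0 p) (Nat.le_of_dvd hh hps))
      (le_max_left _ _)
    have hle := Nat.le_findGreatest hpb hPp
    rw [hF] at hle
    have := hpprime.two_le
    omega
  · intro hall
    by_contra hne
    have hne' : Nat.findGreatest P b ≠ 1 := hne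
    have hF2 : 2 ≤ Nat.findGreatest P b := by omega
    have hPF : P (Nat.findGreatest P b) := Nat.findGreatest_spec h1b hP1
    obtain ⟨p, hpprime, hpdvd⟩ := Nat.exists_prime_and_dvd hne'
    have hFk : Nat.findGreatest P b ∣ k := (Nat.pow_dvd_pow_iff hs0).mp hPF.2
    have hpk : p ∣ k := hpdvd.trans hFk
    have hpmem : p ∈ k.primeFactors := Nat.mem_primeFactors.mpr ⟨hpprime, hpk, hk.ne'⟩
    exact hall p hpmem ((pow_dvd_pow_of_dvd hpdvd s).trans hPF.1)

lemma prod_pow_dvd (s : ℕ) {h : ℕ} (t : Finset ℕ) (ht : ∀ p ∈ t, Nat.Prime p)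
    (hd : ∀ p ∈ t, p ^ s ∣ h) : (∏ p ∈ t, p) ^ s ∣ h := by
  classical
  induction t using Finset.induction_on with
  | empty => simp
  | insert a r ha ih =>
    rw [Finset.prod_insert ha, mul_pow]
    have hap : Nat.Prime a := ht a (Finset.mem_insert_self a r)
    have hcop : Nat.Coprime a (∏ p ∈ r, p) := by
      rw [hap.coprime_iff_not_dvd]
      intro hdvd
      obtain ⟨q, hq, haq⟩ := (Prime.dvd_finset_prod_iff hap.prime _).mp hdvd
      have haeq : a = q := (Nat.prime_dvd_prime_iff_eq hap (ht q (Finset.mem_insert_of_mem hq))).mp haq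
      exact ha (haeq ▸ hq)
    exact (Nat.Coprime.pow s s hcop).mul_dvd_of_dvd_of_dvd
      (hd a (Finset.mem_insert_self a r))
      (ih (fun p hp => ht p (Finset.mem_insert_of_mem hp))
          (fun p hp => hd p (Finset.mem_insert_of_mem hp)))

lemma moebius_ind (s : ℕ) (hs : 1 ≤ s) {k : ℕ} (hk : 0 < k) (hksf : Squarefree k)
    {h : ℕ} (hh : 0 < h) :
    (if ggcd s h (k ^ s) = 1 then (1 : ℂ) else 0)
      = ∑ d ∈ k.divisors, (μ d : ℂ) * (if d ^ s ∣ h then 1 else 0) := by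
  classical
  set t : Finset ℕ := k.primeFactors.filter (fun p => p ^ s ∣ h) with ht
  set g : ℕ := ∏ p ∈ t, p with hg
  have htp : ∀ p ∈ t, Nat.Prime p := fun p hp =>
    Nat.prime_of_mem_primeFactors (Finset.mem_filter.mp hp).1
  have hgk : g ∣ k := Finset.prod_primes_dvd k (fun p hp => (htp p hp).prime)
    (fun p hp => Nat.dvd_of_mem_primeFactors (Finset.mem_filter.mp hp).1)
  have hg0 : g ≠ 0 := by
    rw [hg]
    exact (Finset.prod_pos (fun p hp => (htp p hp).pos)).ne'
  have claim1 : ∀ d ∈ k.divisors, (d ^ s ∣ h ↔ d ∣ g) := by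
    intro d hd
    have dk : d ∣ k := (Nat.mem_divisors.mp hd).1
    have dsf : Squarefree d := hksf.squarefree_of_dvd dk
    constructor
    · intro hdsh
      have hsub : d.primeFactors ⊆ t := by
        intro p hp
        have hpprime := Nat.prime_of_mem_primeFactors hp
        have hpd : p ∣ d := Nat.dvd_of_mem_primeFactors hp
        exact Finset.mem_filter.mpr ⟨Nat.mem_primeFactors.mpr ⟨hpprime, hpd.trans dk, hk.ne'⟩,
          (pow_dvd_pow_of_dvd hpd s).trans hdsh⟩
      calc d = ∏ p ∈ d.primeFactors, p := (Nat.prod_primeFactors_of_squarefree dsf).symm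
        _ ∣ g := hg ▸ Finset.prod_dvd_prod_of_subset _ _ _ hsub
    · intro hdg
      exact dvd_trans (pow_dvd_pow_of_dvd hdg s)
        (prod_pow_dvd s t htp (fun p hp => (Finset.mem_filter.mp hp).2))
  have step1 : ∑ d ∈ k.divisors, (μ d : ℂ) * (if d ^ s ∣ h then 1 else 0)
      = ∑ d ∈ k.divisors, (if d ∣ g then (μ d : ℂ) else 0) := by
    refine Finset.sum_congr rfl fun d hd => ?_
    rw [if_congr (claim1 d hd) rfl rfl, mul_ite, mul_one, mul_zero]
  have hset : k.divisors.filter (fun d => d ∣ g) = g.divisors := by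
    ext d
    simp only [Finset.mem_filter, Nat.mem_divisors]
    constructor
    · rintro ⟨⟨_, _⟩, hdg⟩
      exact ⟨hdg, hg0⟩
    · rintro ⟨hdg, _⟩
      exact ⟨⟨hdg.trans hgk, hk.ne'⟩, hdg⟩
  have hsum : ∑ d ∈ g.divisors, (μ d : ℤ) = if g = 1 then 1 else 0 := by
    have h1 : ((μ : ArithmeticFunction ℤ) * ζ) g = (1 : ArithmeticFunction ℤ) g := by
      rw [ArithmeticFunction.moebius_mul_coe_zeta]
    rwa [ArithmeticFunction.coe_mul_zeta_apply, ArithmeticFunction.one_apply] at h1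
  have hgiff : g = 1 ↔ ∀ p ∈ k.primeFactors, ¬ p ^ s ∣ h := by
    constructor
    · intro hg1 p hp hps
      have hpt : p ∈ t := Finset.mem_filter.mpr ⟨hp, hps⟩
      have : p ∣ g := hg ▸ Finset.dvd_prod_of_mem _ hpt
      rw [hg1] at this
      exact (Nat.prime_of_mem_primeFactors hp).ne_one (Nat.dvd_one.mp this)
    · intro hall
      have : t = ∅ := Finset.filter_eq_empty_iff.mpr (fun {p} hp => hall p hp)
      rw [hg, this, Finset.prod_empty]
  rw [step1, Finset.sum_ite, Finset.sum_const_zero, add_zero, hset]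
  have hsumC : ∑ d ∈ g.divisors, (μ d : ℂ) = if g = 1 then (1 : ℂ) else 0 := by
    calc ∑ d ∈ g.divisors, ((μ d : ℤ) : ℂ)
        = ((∑ d ∈ g.divisors, μ d : ℤ) : ℂ) := by push_cast; rfl
      _ = ((if g = 1 then 1 else 0 : ℤ) : ℂ) := by rw [hsum]
      _ = if g = 1 then (1 : ℂ) else 0 := by split <;> simp
  exact (if_congr ((ggcd_eq_one_iff s hs hh hk).trans hgiff.symm) rfl rfl).trans hsumC.symm


lemma swap_helper (s : ℕ) (hs : 1 ≤ s) {k : ℕ} (hk : 0 < k) (hksf : Squarefree k) (E : ℕ → ℂ) :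
    ∑ h ∈ Finset.Icc 1 (k ^ s), (if ggcd s h (k ^ s) = 1 then E h else 0)
      = ∑ d ∈ k.divisors, (μ d : ℂ) *
          ∑ h ∈ (Finset.Icc 1 (k ^ s)).filter (fun h => d ^ s ∣ h), E h := by
  classical
  have step : ∀ h ∈ Finset.Icc 1 (k ^ s),
      (if ggcd s h (k ^ s) = 1 then E h else 0)
        = ∑ d ∈ k.divisors, (μ d : ℂ) * (if d ^ s ∣ h then E h else 0) := by
    intro h hmem
    have hh : 0 < h := (Finset.mem_Icc.mp hmem).1
    have key := moebius_ind s hs hk hksf hh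
    calc (if ggcd s h (k ^ s) = 1 then E h else 0)
        = (if ggcd s h (k ^ s) = 1 then (1 : ℂ) else 0) * E h := by split <;> simp
      _ = (∑ d ∈ k.divisors, (μ d : ℂ) * (if d ^ s ∣ h then 1 else 0)) * E h := by rw [key]
      _ = ∑ d ∈ k.divisors, (μ d : ℂ) * (if d ^ s ∣ h then E h else 0) := by
          rw [Finset.sum_mul]
          refine Finset.sum_congr rfl fun d _ => ?_
          split <;> simp
  rw [Finset.sum_congr rfl step, Finset.sum_comm]
  refine Finset.sum_congr rfl fun d _ => ?_
  rw [Finset.mul_sum]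
  simp only [mul_ite, mul_zero]
  rw [Finset.sum_filter]

lemma reindex (s : ℕ) {d k : ℕ} (hs0 : s ≠ 0) (hd : d ∣ k) (hk : 0 < k) (E : ℕ → ℂ) :
    ∑ h ∈ (Finset.Icc 1 (k ^ s)).filter (fun h => d ^ s ∣ h), E h
      = ∑ j ∈ Finset.Icc 1 ((k / d) ^ s), E (d ^ s * j) := by
  classical
  have hd0 : 0 < d := Nat.pos_of_dvd_of_pos hd hk
  have hds : 0 < d ^ s := pow_pos hd0 s
  have hkd : d * (k / d) = k := Nat.mul_div_cancel' hd
  have hpow : k ^ s = d ^ s * (k / d) ^ s := by rw [← mul_pow, hkd]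
  have hdiv : k ^ s / d ^ s = (k / d) ^ s := by
    rw [hpow, Nat.mul_div_cancel_left _ hds]
  refine Finset.sum_bij' (fun h _ => h / d ^ s) (fun j _ => d ^ s * j) ?_ ?_ ?_ ?_ ?_
  · intro h hmem
    rw [Finset.mem_filter, Finset.mem_Icc] at hmem
    obtain ⟨⟨h1, h2⟩, hdvd⟩ := hmem
    rw [Finset.mem_Icc]
    constructor
    · rw [Nat.one_le_div_iff hds]
      exact Nat.le_of_dvd (by omega) hdvd
    · rw [← hdiv]
      exact Nat.div_le_div_right h2
  · intro j hmem
    rw [Finset.mem_Icc] at hmem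
    rw [Finset.mem_filter, Finset.mem_Icc]
    obtain ⟨hj1, hj2⟩ := hmem
    refine ⟨⟨Nat.mul_pos hds (by omega), ?_⟩, Dvd.intro j rfl⟩
    rw [hpow]
    exact Nat.mul_le_mul_left _ hj2
  · intro h hmem
    rw [Finset.mem_filter] at hmem
    exact Nat.mul_div_cancel' hmem.2
  · intro j _
    exact Nat.mul_div_cancel_left _ hds
  · intro h hmem
    rw [Finset.mem_filter] at hmem
    rw [Nat.mul_div_cancel' hmem.2]

lemma CRS_formula (s : ℕ) (hs : 1 ≤ s) (k n : ℕ) (hk : 0 < k) (hn : 0 < n) (hksf : Squarefree k) :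
    CRS s k (n ^ s) = ∑ d ∈ k.divisors, (μ d : ℂ) *
      (if k / d ∣ n then ((k / d : ℕ) : ℂ) ^ s else 0) := by
  classical
  have hs0 : s ≠ 0 := by omega
  have hCRS : CRS s k (n ^ s) = ∑ h ∈ Finset.Icc 1 (k ^ s),
      (if ggcd s h (k ^ s) = 1 then
        Complex.exp (2 * Real.pi * Complex.I * ((n ^ s : ℕ) : ℂ) * (h : ℂ) / ((k : ℂ) ^ s))
      else 0) := rfl
  rw [hCRS, swap_helper s hs hk hksf]
  refine Finset.sum_congr rfl fun d hd => ?_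
  have hdk : d ∣ k := (Nat.mem_divisors.mp hd).1
  have hd0 : 0 < d := Nat.pos_of_dvd_of_pos hdk hk
  have hm0 : 0 < k / d := Nat.div_pos (Nat.le_of_dvd hk hdk) hd0
  have hkd : d * (k / d) = k := Nat.mul_div_cancel' hdk
  congr 1
  rw [reindex s hs0 hdk hk]
  have hflip : ∀ j : ℕ,
      Complex.exp (2 * Real.pi * Complex.I * ((n ^ s : ℕ) : ℂ) * ((d ^ s * j : ℕ) : ℂ) / ((k : ℂ) ^ s))
        = Complex.exp (2 * Real.pi * Complex.I * ((n ^ s : ℕ) : ℂ) * (j : ℂ) / (((k / d) ^ s : ℕ) : ℂ)) := by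
    intro j
    congr 1
    have hkC : (k : ℂ) = (d : ℂ) * ((k / d : ℕ) : ℂ) := by
      rw [← Nat.cast_mul, hkd]
    have hdC : ((d : ℕ) : ℂ) ≠ 0 := Nat.cast_ne_zero.mpr hd0.ne'
    have hmC : (((k / d : ℕ) : ℕ) : ℂ) ≠ 0 := Nat.cast_ne_zero.mpr hm0.ne'
    rw [hkC]
    push_cast
    field_simp
    ring
  rw [Finset.sum_congr rfl (fun j _ => hflip j), geo_sum _ _ (pow_pos hm0 s)]
  rw [if_congr (Nat.pow_dvd_pow_iff hs0) rfl rfl]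
  split <;> push_cast <;> ring

/-- For squarefree `k` and `n`, `μ(k)·c_k^{(s)}(n^s) = μ(n)·c_n^{(s)}(k^s)`. -/
theorem moebius_CRS_symm (s : ℕ) (hs : 1 ≤ s) (k n : ℕ) (hk : 0 < k) (hn : 0 < n)
    (hksf : Squarefree k) (hnsf : Squarefree n) :
    (μ k : ℂ) * CRS s k (n ^ s) = (μ n : ℂ) * CRS s n (k ^ s) := by
  have main : ∀ (a b : ℕ), 0 < a → 0 < b → Squarefree a → Squarefree b →
      (μ a : ℂ) * CRS s a (b ^ s)
        = ∑ e ∈ (Nat.gcd a b).divisors, (μ e : ℂ) * (e : ℂ) ^ s := by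
    intro a b ha hb hasf hbsf
    classical
    set F : ℕ → ℂ := fun e =>
      (((μ a * μ (a / e) : ℤ)) : ℂ) * (if e ∣ b then (e : ℂ) ^ s else 0) with hF
    rw [CRS_formula s hs a b ha hb hasf, Finset.mul_sum]
    have step1 : ∀ d ∈ a.divisors,
        (μ a : ℂ) * ((μ d : ℂ) * (if a / d ∣ b then ((a / d : ℕ) : ℂ) ^ s else 0))
          = F (a / d) := by
      intro d hd
      have hdvd : d ∣ a := (Nat.mem_divisors.mp hd).1
      have hdd : a / (a / d) = d := Nat.div_div_self hdvd ha.ne'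
      rw [hF]
      simp only [hdd]
      push_cast
      ring
    rw [Finset.sum_congr rfl step1, Nat.sum_div_divisors a F]
    have step2 : ∀ e ∈ a.divisors, F e = (μ e : ℂ) * (if e ∣ b then (e : ℂ) ^ s else 0) := by
      intro e he
      have hedvd : e ∣ a := (Nat.mem_divisors.mp he).1
      have hmul : e * (a / e) = a := Nat.mul_div_cancel' hedvd
      have hcop : Nat.Coprime e (a / e) :=
        Nat.coprime_of_squarefree_mul (by rw [hmul]; exact hasf)
      have hsplit : μ a = μ e * μ (a / e) := by
        conv_lhs => rw [← hmul]
        exact ArithmeticFunction.isMultiplicative_moebius.map_mul_of_coprime hcop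
      have hdivsf : Squarefree (a / e) :=
        hasf.squarefree_of_dvd (Nat.div_dvd_of_dvd hedvd)
      have h2 : μ (a / e) * μ (a / e) = 1 := by
        have := ArithmeticFunction.moebius_sq_eq_one_of_squarefree hdivsf
        rwa [sq] at this
      have key : (μ a : ℤ) * μ (a / e) = μ e := by
        calc (μ a : ℤ) * μ (a / e) = μ e * (μ (a / e) * μ (a / e)) := by rw [hsplit]; ring
          _ = μ e := by rw [h2, mul_one]
      rw [hF]
      simp only [key]
    rw [Finset.sum_congr rfl step2]
    simp only [mul_ite, mul_zero]
    rw [Finset.sum_ite, Finset.sum_const_zero, add_zero]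
    have hset : a.divisors.filter (fun e => e ∣ b) = (Nat.gcd a b).divisors := by
      ext e
      simp only [Finset.mem_filter, Nat.mem_divisors, Nat.dvd_gcd_iff]
      constructor
      · rintro ⟨⟨h1, _⟩, h2⟩
        exact ⟨⟨h1, h2⟩, Nat.gcd_ne_zero_left ha.ne'⟩
      · rintro ⟨⟨h1, h2⟩, _⟩
        exact ⟨⟨h1, ha.ne'⟩, h2⟩
    rw [hset]
  rw [main k n hk hn hksf hnsf, main n k hn hk hnsf hksf, Nat.gcd_comm]
end

section
/- Let s ≥ 1 be an integer. For all positive integers k and n, Σ_{d | k} c_d^{(s)}(n) equals k^s if k^s | n and equals 0 otherwise. (That is, writing ξ_k^{(s)}(n) = k^s if k^s | n and 0 otherwise, one has ξ_k^{(s)}(n) = Σ_{d | k} c_d^{(s)}(n).) -/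
open scoped BigOperators
open ArithmeticFunction

lemma ggcd_eq_one_iff_s11 {s a b : ℕ} (hs : 1 ≤ s) (ha : 0 < a) :
    ggcd s a b = 1 ↔ ∀ d, d ^ s ∣ a → d ^ s ∣ b → d = 1 := by
  have hss : s ≠ 0 := by omega
  unfold ggcd
  constructor
  · intro h d hda hdb
    have hd0 : d ≠ 0 := by
      rintro rfl
      rw [Nat.zero_pow hs, Nat.zero_dvd] at hda
      omega
    have hdle : d ≤ a := le_trans (Nat.le_self_pow hss d) (Nat.le_of_dvd ha hda)
    have hle := Nat.le_findGreatest (P := fun d => d ^ s ∣ a ∧ d ^ s ∣ b)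
      (le_trans hdle (le_max_left a b)) ⟨hda, hdb⟩
    have hF : Nat.findGreatest (fun d => d ^ s ∣ a ∧ d ^ s ∣ b) (max a b) = 1 :=
      (pow_eq_one_iff.mp h).resolve_right hss
    omega
  · intro h
    have h1 : (fun d => d ^ s ∣ a ∧ d ^ s ∣ b) 1 := by simp
    have hmem : 1 ≤ max a b := le_trans ha (le_max_left a b)
    have hspec := Nat.findGreatest_spec (P := fun d => d ^ s ∣ a ∧ d ^ s ∣ b) hmem h1
    rw [h _ hspec.1 hspec.2, one_pow]

lemma key_dvd {s : ℕ} (hs : 1 ≤ s) {d m c j : ℕ} (hd : 0 < d) (hm : 0 < m) (hj : 0 < j)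
    (hc : c ∣ d * m) (hcs : c ^ s ∣ m ^ s * j)
    (hcop : ∀ e, e ∣ d → e ^ s ∣ j → e = 1) : c ∣ m := by
  have hc0 : c ≠ 0 := by
    rintro rfl
    rw [Nat.zero_dvd] at hc
    exact absurd hc (Nat.mul_pos hd hm).ne'
  rw [← Nat.factorization_le_iff_dvd hc0 hm.ne', Finsupp.le_def]
  intro p
  by_contra hcon
  push_neg at hcon
  have hp : p.Prime := by
    by_contra hp
    simp [Nat.factorization_eq_zero_of_not_prime _ hp] at hcon
  set vc := c.factorization p
  set vm := m.factorization p with hvm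
  -- from c^s ∣ m^s * j
  have h1 : s * vc ≤ s * vm + j.factorization p := by
    have := (Nat.factorization_le_iff_dvd (pow_ne_zero s hc0)
      (Nat.mul_pos (pow_pos hm s) hj).ne').mpr hcs
    have := this p
    simpa [Nat.factorization_mul (pow_pos hm s).ne' hj.ne', Nat.factorization_pow] using this
  have hjv : s ≤ j.factorization p := by
    have : s * (vm + 1) ≤ s * vc := Nat.mul_le_mul_left s (by omega)
    nlinarith
  have hpsj : p ^ s ∣ j :=
    (Nat.Prime.pow_dvd_iff_le_factorization hp hj.ne').mpr hjv
  -- from c ∣ d * m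
  have h2 : vc ≤ d.factorization p + vm := by
    have := (Nat.factorization_le_iff_dvd hc0 (Nat.mul_pos hd hm).ne').mpr hc
    have := this p
    simpa [Nat.factorization_mul hd.ne' hm.ne'] using this
  have hpd : p ∣ d :=
    (Nat.Prime.dvd_iff_one_le_factorization hp hd.ne').mpr (by omega)
  exact hp.one_lt.ne' (hcop p hpd hpsj)

lemma geom_step (M n : ℕ) (hM0 : 0 < M) :
    ∑ h ∈ Finset.Icc 1 M, Complex.exp (2 * Real.pi * Complex.I * n * h / (M : ℂ))
      = if M ∣ n then (M : ℂ) else 0 := by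
  have hMne : (M : ℂ) ≠ 0 := Nat.cast_ne_zero.mpr hM0.ne'
  set zz : ℂ := Complex.exp (2 * Real.pi * Complex.I * n / (M : ℂ)) with hzz
  have hexp : ∀ h : ℕ,
      Complex.exp (2 * Real.pi * Complex.I * n * h / (M : ℂ)) = zz ^ h := by
    intro h
    rw [hzz, ← Complex.exp_nat_mul]
    congr 1
    field_simp
  simp_rw [hexp]
  by_cases hdvd : M ∣ n
  · obtain ⟨t, ht⟩ := hdvd
    have hzz1 : zz = 1 := by
      rw [hzz]
      have harg : 2 * Real.pi * Complex.I * (n : ℂ) / (M : ℂ)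
          = (t : ℂ) * (2 * Real.pi * Complex.I) := by
        rw [ht]; push_cast; field_simp
      rw [harg]
      exact_mod_cast Complex.exp_nat_mul_two_pi_mul_I t
    rw [if_pos ⟨t, ht⟩, hzz1]
    simp [Nat.card_Icc]
  · have hzzM : zz ^ M = 1 := by
      rw [hzz, ← Complex.exp_nat_mul]
      have harg : (M : ℂ) * (2 * Real.pi * Complex.I * (n : ℂ) / (M : ℂ))
          = (n : ℂ) * (2 * Real.pi * Complex.I) := by field_simp
      rw [harg]
      exact Complex.exp_nat_mul_two_pi_mul_I n
    have hzzne : zz ≠ 1 := by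
      intro h1
      rw [hzz, Complex.exp_eq_one_iff] at h1
      obtain ⟨t, ht⟩ := h1
      have h2pi : (2 * (Real.pi : ℂ) * Complex.I : ℂ) ≠ 0 := by
        simp [Real.pi_ne_zero, Complex.I_ne_zero]
      have hnt : (n : ℂ) = (t : ℂ) * (M : ℂ) := by
        field_simp at ht
        have h3 : 2 * (Real.pi : ℂ) * Complex.I * (n : ℂ)
            = 2 * (Real.pi : ℂ) * Complex.I * ((t : ℂ) * (M : ℂ)) := by
          rw [ht]; ring
        exact mul_left_cancel₀ h2pi h3
      have hint : (n : ℤ) = t * (M : ℤ) := by exact_mod_cast hnt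
      exact hdvd (Int.natCast_dvd_natCast.mp ⟨t, by rw [hint]; ring⟩)
    rw [if_neg hdvd]
    rw [← Finset.Ico_add_one_right_eq_Icc, Finset.sum_Ico_eq_sum_range]
    simp only [Nat.add_sub_cancel, pow_add, pow_one]
    rw [← Finset.mul_sum, geom_sum_eq hzzne]
    rw [hzzM]
    simp

set_option maxHeartbeats 1600000 in
/-- `ξ_k^{(s)}(n) = Σ_{d ∣ k} c_d^{(s)}(n)`, where `ξ_k^{(s)}(n) = k^s` if `k^s ∣ n`
and `0` otherwise. -/
theorem sum_divisors_CRS (s : ℕ) (hs : 1 ≤ s) (k n : ℕ) (hk : 0 < k) (hn : 0 < n) :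
    ∑ d ∈ k.divisors, CRS s d n = if k ^ s ∣ n then ((k : ℂ)) ^ s else 0 := by
  have hss : s ≠ 0 := by omega
  set M := k ^ s with hM
  have hM0 : 0 < M := pow_pos hk s
  set F : ℕ → ℂ := fun h => Complex.exp (2 * Real.pi * Complex.I * n * h / (M : ℂ)) with hF
  -- the "largest c with c^s ∣ h and c ∣ k" function
  set C : ℕ → ℕ := fun h => Nat.findGreatest (fun c => c ^ s ∣ h ∧ c ∣ k) k with hCdef
  have hCspec : ∀ h, 0 < h → (C h) ^ s ∣ h ∧ C h ∣ k :=
    fun h _ => Nat.findGreatest_spec (P := fun c => c ^ s ∣ h ∧ c ∣ k) hk (by simp)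
  have hCpos : ∀ h, 0 < C h := fun h =>
    Nat.le_findGreatest (P := fun c => c ^ s ∣ h ∧ c ∣ k) hk (by simp)
  have hCmax : ∀ h c, c ^ s ∣ h → c ∣ k → c ≤ C h := fun h c h1 h2 =>
    Nat.le_findGreatest (Nat.le_of_dvd hk h2) ⟨h1, h2⟩
  -- Step 1: each CRS term rewritten over a filtered set with values of F
  have step1 : ∀ d ∈ k.divisors, CRS s d n =
      ∑ j ∈ (Finset.Icc 1 (d ^ s)).filter (fun j => ggcd s j (d ^ s) = 1),
        F ((k / d) ^ s * j) := by
    intro d hd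
    rw [Nat.mem_divisors] at hd
    obtain ⟨hdk, -⟩ := hd
    have hd0 : 0 < d := Nat.pos_of_dvd_of_pos hdk hk
    rw [CRS, ← Finset.sum_filter]
    refine Finset.sum_congr rfl fun j hj => ?_
    have e1 : ((k / d : ℕ) : ℂ) * (d : ℂ) = (k : ℂ) := by
      rw [← Nat.cast_mul, Nat.div_mul_cancel hdk]
    have hkd0 : ((k / d : ℕ) : ℂ) ≠ 0 := by
      have : 0 < k / d := Nat.div_pos (Nat.le_of_dvd hk hdk) hd0
      exact_mod_cast this.ne'
    have hd0' : (d : ℂ) ≠ 0 := Nat.cast_ne_zero.mpr hd0.ne'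
    rw [hF]
    have hKd : ((k / d : ℕ) : ℂ) ^ s * (d : ℂ) ^ s = (k : ℂ) ^ s := by
      rw [← mul_pow, e1]
    congr 1
    push_cast [hM]
    rw [← hKd, div_eq_div_iff (pow_ne_zero s hd0')
      (mul_ne_zero (pow_ne_zero s hkd0) (pow_ne_zero s hd0'))]
    ring
  rw [Finset.sum_congr rfl step1, Finset.sum_sigma']
  -- Step 2: the bijection onto Icc 1 M
  have step2 : (∑ p ∈ k.divisors.sigma
      (fun d => (Finset.Icc 1 (d ^ s)).filter (fun j => ggcd s j (d ^ s) = 1)),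
        F ((k / p.1) ^ s * p.2)) = ∑ h ∈ Finset.Icc 1 M, F h := by
    refine Finset.sum_nbij' (fun p => (k / p.1) ^ s * p.2)
      (fun h => ⟨k / C h, h / (C h) ^ s⟩) ?_ ?_ ?_ ?_ ?_
    · rintro ⟨d, j⟩ hp
      rw [Finset.mem_sigma, Nat.mem_divisors, Finset.mem_filter, Finset.mem_Icc] at hp
      obtain ⟨⟨hdk, -⟩, ⟨hj1, hj2⟩, -⟩ := hp
      have hd0 : 0 < d := Nat.pos_of_dvd_of_pos hdk hk
      have hkd : 0 < k / d := Nat.div_pos (Nat.le_of_dvd hk hdk) hd0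
      rw [Finset.mem_Icc]
      constructor
      · exact Nat.one_le_iff_ne_zero.mpr (Nat.mul_ne_zero (pow_pos hkd s).ne' (by omega))
      · calc (k / d) ^ s * j ≤ (k / d) ^ s * d ^ s := Nat.mul_le_mul_left _ hj2
          _ = M := by rw [← mul_pow, Nat.div_mul_cancel hdk]
    · intro h hh
      rw [Finset.mem_Icc] at hh
      obtain ⟨hh1, hh2⟩ := hh
      have hh0 : 0 < h := hh1
      obtain ⟨hCs, hCk⟩ := hCspec h hh0
      have hC0 := hCpos h
      have hCsp : 0 < (C h) ^ s := pow_pos hC0 s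
      set m := k / C h with hm
      have hm0 : 0 < m := Nat.div_pos (Nat.le_of_dvd hk hCk) hC0
      have hmC : C h * m = k := Nat.mul_div_cancel' hCk
      set j' := h / (C h) ^ s with hj'
      have hj'C : j' * (C h) ^ s = h := Nat.div_mul_cancel hCs
      have hj'0 : 0 < j' := by
        rcases Nat.eq_zero_or_pos j' with h0 | h0
        · rw [h0, zero_mul] at hj'C; omega
        · exact h0
      rw [Finset.mem_sigma, Nat.mem_divisors, Finset.mem_filter, Finset.mem_Icc]
      refine ⟨⟨Nat.div_dvd_of_dvd hCk, hk.ne'⟩, ⟨hj'0, ?_⟩, ?_⟩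
      · -- j' ≤ m ^ s
        have : j' * (C h) ^ s ≤ m ^ s * (C h) ^ s := by
          rw [hj'C, ← mul_pow, mul_comm m, hmC]; exact hh2
        exact Nat.le_of_mul_le_mul_right this hCsp
      · rw [ggcd_eq_one_iff_s11 hs hj'0]
        intro e he1 he2
        have hem : e ∣ m := (Nat.pow_dvd_pow_iff hss).mp he2
        have he0 : e ≠ 0 := by
          rintro rfl
          rw [Nat.zero_pow hs, Nat.zero_dvd] at he1
          omega
        have h1' : (C h * e) ^ s ∣ h := by
          rw [mul_pow]
          calc (C h) ^ s * e ^ s ∣ (C h) ^ s * j' := mul_dvd_mul_left _ he1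
            _ = h := by rw [mul_comm]; exact hj'C
        have h2 : C h * e ∣ k := by
          rw [← hmC]; exact mul_dvd_mul_left _ hem
        have := hCmax h (C h * e) h1' h2
        have : e ≤ 1 := by
          by_contra hcon
          push_neg at hcon
          nlinarith
        omega
    · rintro ⟨d, j⟩ hp
      rw [Finset.mem_sigma, Nat.mem_divisors, Finset.mem_filter, Finset.mem_Icc] at hp
      obtain ⟨⟨hdk, -⟩, ⟨hj1, hj2⟩, hgg⟩ := hp
      have hd0 : 0 < d := Nat.pos_of_dvd_of_pos hdk hk
      have hkd : 0 < k / d := Nat.div_pos (Nat.le_of_dvd hk hdk) hd0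
      set h := (k / d) ^ s * j with hhdef
      have hh0 : 0 < h := Nat.mul_pos (pow_pos hkd s) hj1
      -- C h = k / d
      have hge : k / d ≤ C h := hCmax h (k / d) (Dvd.intro _ rfl) (Nat.div_dvd_of_dvd hdk)
      have hcop : ∀ e, e ∣ d → e ^ s ∣ j → e = 1 := by
        intro e hed hej
        exact (ggcd_eq_one_iff_s11 hs hj1).mp hgg e hej (pow_dvd_pow_of_dvd hed s)
      have hCk' : C h ∣ k := (hCspec h hh0).2
      have hle : C h ∣ k / d := by
        refine key_dvd hs hd0 hkd hj1 ?_ ?_ hcop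
        · rwa [Nat.mul_div_cancel' hdk]
        · exact (hCspec h hh0).1
      have hCeq : C h = k / d :=
        Nat.le_antisymm (Nat.le_of_dvd hkd hle) hge
      have hkk : k / (k / d) = d := Nat.div_div_self hdk hk.ne'
      ext
      · simp only [hCeq, hkk]
      · simp only [hCeq]
        rw [Nat.mul_div_cancel_left _ (pow_pos hkd s)]
    · intro h hh
      rw [Finset.mem_Icc] at hh
      have hh0 : 0 < h := hh.1
      obtain ⟨hCs, hCk⟩ := hCspec h hh0
      simp only
      rw [Nat.div_div_self hCk hk.ne', Nat.mul_div_cancel' hCs]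
    · rintro ⟨d, j⟩ hp
      rfl
  refine Eq.trans step2 ?_
  simp only [hF]
  rw [geom_step M n hM0]
  split_ifs with h
  · rw [hM]; push_cast; ring
  · rfl
end
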